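/- arXiv:1908.06348 — 3 statements merged into one kernel-verified Lean document; each statement's English description precedes it below -/
import Mathlib

section
/- With h and h_{T,M} as above (h ∈ 𝓗⁺(S,N), M = T^μ, 0 < μ < 1), one has ∫_{−∞}^{∞} h_{T,M}(t) log(1/4 + t²) t² dt ∼ 2MT² log(T²) · ∫_{−∞}^{∞} h(t) dt as T → ∞. -/
open Real MeasureTheory Filter Topology
set_option maxHeartbeats 800000

lemma aux_int_exp {c : ℝ} (hc : 0 < c) :
    Integrable (fun s : ℝ => Real.exp (-(c * |s|))) := by
  apply LocallyIntegrable.integrable_of_isBigO_atTop_of_norm_isNegInvariant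
    (g := fun x : ℝ => Real.exp (-c * x))
  · exact (Real.continuous_exp.comp (continuous_const.mul continuous_abs).neg).locallyIntegrable
  · filter_upwards with x
    simp [abs_neg]
  · apply Asymptotics.IsBigO.of_bound 1
    filter_upwards [eventually_ge_atTop (0:ℝ)] with x hx
    simp [abs_of_nonneg hx, Real.abs_exp, neg_mul]
  · exact ⟨Set.Ioi 0, Ioi_mem_atTop 0, exp_neg_integrableOn_Ioi 0 hc⟩

lemma aux_cov {M : ℝ} (hM : 0 < M) (T : ℝ) (F : ℝ → ℝ) :
    (∫ t, F t) = M * ∫ s, F (M * s + T) := by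
  have h1 : (∫ s : ℝ, F (M * s + T)) = |M⁻¹| • ∫ y : ℝ, F (y + T) :=
    MeasureTheory.Measure.integral_comp_mul_left (fun u => F (u + T)) M
  rw [h1, integral_add_right_eq_self, abs_of_pos (inv_pos.mpr hM), smul_eq_mul,
    ← mul_assoc, mul_inv_cancel₀ hM.ne', one_mul]

lemma aux_key {C : ℝ} (hCpos : 0 < C) {h : ℝ → ℝ} (hnonneg : ∀ t : ℝ, 0 ≤ h t)
    (hhb : ∀ t : ℝ, h t ≤ C * Real.exp (-(Real.pi * |t|)))
    {μ : ℝ} (hμ1 : μ < 1) {T : ℝ} (hT : 3 ≤ T) (s : ℝ) :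
    |h s * (Real.log (1/4 + (T + T^μ * s)^2) * (T + T^μ * s)^2)|
      ≤ T^2 * Real.log (T^2) * (2*C*Real.exp (-((Real.pi-3) * |s|))) := by
  have hT0 : (0:ℝ) < T := by linarith
  have hT1 : (1:ℝ) ≤ T := by linarith
  set X := T + T^μ * s with hX
  have hMpos : 0 < T^μ := Real.rpow_pos_of_pos hT0 μ
  have hM : T^μ ≤ T := by
    calc T^μ ≤ T^(1:ℝ) := Real.rpow_le_rpow_of_exponent_le hT1 hμ1.le
    _ = T := Real.rpow_one T
  have hXabs : |X| ≤ T * (1 + |s|) := by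
    calc |X| ≤ |T| + |T^μ * s| := abs_add_le _ _
      _ = T + T^μ * |s| := by rw [abs_of_pos hT0, abs_mul, abs_of_pos hMpos]
      _ ≤ T + T * |s| := by nlinarith [abs_nonneg s]
      _ = T * (1+|s|) := by ring
  have hX2 : X^2 ≤ T^2 * (1+|s|)^2 := by
    have h1 : |X|^2 ≤ (T * (1+|s|))^2 := by
      apply pow_le_pow_left₀ (abs_nonneg X) hXabs
    rw [sq_abs] at h1; nlinarith
  have hlogT : 1 ≤ Real.log T := by
    rw [Real.le_log_iff_exp_le hT0]
    calc Real.exp 1 ≤ 2.7182818286 := Real.exp_one_lt_d9.le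
      _ ≤ T := by linarith
  have hlog1s : Real.log (1+|s|) ≤ |s| := by
    have := Real.log_le_sub_one_of_pos (show (0:ℝ) < 1+|s| by positivity)
    linarith
  have hlog1s0 : 0 ≤ Real.log (1+|s|) := Real.log_nonneg (by simp [abs_nonneg s])
  have h9 : (9:ℝ) ≤ T^2 := by nlinarith
  have h1s2 : (1:ℝ) ≤ (1+|s|)^2 := by nlinarith [abs_nonneg s]
  clear hX; clear_value X
  have hP : (9:ℝ) ≤ T^2 * (1+|s|)^2 := by
    calc (9:ℝ) = 9 * 1 := by norm_num
      _ ≤ T^2 * (1+|s|)^2 := mul_le_mul h9 h1s2 (by norm_num) (by positivity)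
  have hXup : 1/4 + X^2 ≤ 2 * (T^2 * (1+|s|)^2) := by linarith [hX2, hP]
  have hlogup : Real.log (1/4 + X^2) ≤ Real.log 2 + 2*Real.log T + 2*Real.log (1+|s|) := by
    have h1 : Real.log (1/4+X^2) ≤ Real.log (2*(T^2*(1+|s|)^2)) := by
      exact Real.log_le_log (by nlinarith [sq_nonneg X]) hXup
    rw [Real.log_mul (by norm_num) (by positivity), Real.log_mul (by positivity) (by positivity),
      Real.log_pow, Real.log_pow] at h1
    push_cast at h1
    linarith
  have hlogdown : -(Real.log 2 + 2*Real.log T + 2*Real.log (1+|s|)) ≤ Real.log (1/4+X^2) := by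
    have h14 : Real.log (1/4 : ℝ) ≤ Real.log (1/4 + X^2) :=
      Real.log_le_log (by norm_num) (by nlinarith [sq_nonneg X])
    have h2 : Real.log (1/4 : ℝ) = -(2*Real.log 2) := by
      rw [show (1/4:ℝ) = ((2:ℝ)^(2:ℕ))⁻¹ by norm_num, Real.log_inv, Real.log_pow]
      push_cast; ring
    have hl2 : Real.log 2 ≤ 1 := by
      have := Real.log_two_lt_d9; linarith
    linarith
  have hlogT2 : Real.log (T^2) = 2 * Real.log T := by
    rw [Real.log_pow]; push_cast; ring
  have habslog : |Real.log (1/4+X^2)| ≤ 2 * Real.log (T^2) * (1+|s|) := by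
    rw [abs_le, hlogT2]
    have hl2 : Real.log 2 ≤ 1 := by have := Real.log_two_lt_d9; linarith
    have hs1 : |s| ≤ Real.log T * |s| := le_mul_of_one_le_left (abs_nonneg s) hlogT
    constructor <;> nlinarith
  -- combine
  have hhs : 0 ≤ h s := hnonneg s
  have habs : |h s * (Real.log (1/4 + X^2) * X^2)| = h s * |Real.log (1/4+X^2)| * X^2 := by
    rw [abs_mul, abs_mul, abs_of_nonneg hhs, abs_of_nonneg (sq_nonneg X), mul_assoc]
  rw [habs]
  have hlogT2pos : 0 ≤ Real.log (T^2) := by rw [hlogT2]; linarith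
  have step1 : h s * |Real.log (1/4+X^2)| ≤ (C * Real.exp (-(Real.pi * |s|))) * (2 * Real.log (T^2) * (1+|s|)) :=
    mul_le_mul (hhb s) habslog (abs_nonneg _) (by positivity)
  have step2 : h s * |Real.log (1/4+X^2)| * X^2
      ≤ ((C * Real.exp (-(Real.pi * |s|))) * (2 * Real.log (T^2) * (1+|s|))) * (T^2 * (1+|s|)^2) :=
    mul_le_mul step1 hX2 (sq_nonneg X) (by positivity)
  refine step2.trans ?_
  have hcube : (1+|s|)^3 ≤ Real.exp (3*|s|) := by
    have h1 : (1+|s|) ≤ Real.exp |s| := by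
      have := Real.add_one_le_exp |s|; linarith
    calc (1+|s|)^3 ≤ (Real.exp |s|)^3 := pow_le_pow_left₀ (by positivity) h1 3
      _ = Real.exp (3*|s|) := by rw [← Real.exp_nat_mul]; norm_num
  have hexpmul : Real.exp (-(Real.pi * |s|)) * Real.exp (3*|s|) = Real.exp (-((Real.pi-3) * |s|)) := by
    rw [← Real.exp_add]; ring_nf
  have key : Real.exp (-(Real.pi * |s|)) * (1+|s|)^3 ≤ Real.exp (-((Real.pi-3) * |s|)) := by
    calc Real.exp (-(Real.pi * |s|)) * (1+|s|)^3 ≤ Real.exp (-(Real.pi * |s|)) * Real.exp (3*|s|) := by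
          apply mul_le_mul_of_nonneg_left hcube (Real.exp_pos _).le
      _ = _ := hexpmul
  calc C * Real.exp (-(Real.pi * |s|)) * (2 * Real.log (T^2) * (1+|s|)) * (T^2 * (1+|s|)^2)
      = (T^2 * Real.log (T^2) * (2*C)) * (Real.exp (-(Real.pi * |s|)) * (1+|s|)^3) := by ring
    _ ≤ (T^2 * Real.log (T^2) * (2*C)) * Real.exp (-((Real.pi-3) * |s|)) := by
        apply mul_le_mul_of_nonneg_left key (by positivity)
    _ = T^2 * Real.log (T^2) * (2*C*Real.exp (-((Real.pi-3) * |s|))) := by ring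

lemma aux_int_hW {C : ℝ} (hCpos : 0 < C) {h : ℝ → ℝ} (hnonneg : ∀ t : ℝ, 0 ≤ h t)
    (hcont : Continuous h)
    (hhb : ∀ t : ℝ, h t ≤ C * Real.exp (-(Real.pi * |t|)))
    {μ : ℝ} (hμ1 : μ < 1) {T : ℝ} (hT : 3 ≤ T) :
    Integrable (fun s : ℝ => h s * (Real.log (1/4 + (T + T^μ * s)^2) * (T + T^μ * s)^2)) := by
  have hpi3 : (0:ℝ) < Real.pi - 3 := by linarith [Real.pi_gt_three]
  have hbase : Integrable (fun s : ℝ => T^2 * Real.log (T^2) * (2*C*Real.exp (-((Real.pi-3) * |s|)))) := by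
    exact ((aux_int_exp hpi3).const_mul (2*C)).const_mul (T^2 * Real.log (T^2))
  have hc2 : Continuous fun s : ℝ => 1/4 + (T + T^μ * s)^2 :=
    continuous_const.add ((continuous_const.add (continuous_const.mul continuous_id)).pow 2)
  have hne : ∀ s : ℝ, 1/4 + (T + T^μ * s)^2 ≠ 0 := fun s => by positivity
  have hmeas : Continuous fun s : ℝ =>
      h s * (Real.log (1/4 + (T + T^μ * s)^2) * (T + T^μ * s)^2) :=
    hcont.mul ((hc2.log hne).mul
      ((continuous_const.add (continuous_const.mul continuous_id)).pow 2))
  apply hbase.mono hmeas.aestronglyMeasurable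
  filter_upwards with s
  rw [Real.norm_eq_abs, Real.norm_eq_abs]
  refine (aux_key hCpos hnonneg hhb hμ1 hT s).trans (le_abs_self _)

lemma aux_num {h : ℝ → ℝ} (heven : ∀ t : ℝ, h (-t) = h t)
    {M T : ℝ} (hM : 0 < M)
    (hint : Integrable (fun s : ℝ => h s * (Real.log (1/4 + (T + M * s)^2) * (T + M * s)^2))) :
    (∫ t : ℝ, (h ((t - T) / M) + h ((t + T) / M)) * Real.log (1 / 4 + t ^ 2) * t ^ 2)
      = 2 * M * ∫ s : ℝ, h s * (Real.log (1/4 + (T + M * s)^2) * (T + M * s)^2) := by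
  set g : ℝ → ℝ := fun s => h s * (Real.log (1/4 + (T + M * s)^2) * (T + M * s)^2) with hg
  have hgF : ∀ t : ℝ, g ((t - T)/M) = h ((t-T)/M) * Real.log (1/4+t^2) * t^2 := by
    intro t
    have h1 : T + M * ((t - T)/M) = t := by field_simp; ring
    show h ((t-T)/M) * (Real.log (1/4 + (T + M * ((t-T)/M))^2) * (T + M * ((t-T)/M))^2) = _
    rw [h1]; ring
  have hgneg : ∀ t : ℝ, g ((-t - T)/M) = h ((t+T)/M) * Real.log (1/4+t^2) * t^2 := by
    intro t
    have h1 : T + M * ((-t - T)/M) = -t := by field_simp; ring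
    have h2 : h ((-t - T)/M) = h ((t+T)/M) := by
      rw [← heven ((t+T)/M)]; congr 1; field_simp; ring
    show h ((-t-T)/M) * (Real.log (1/4 + (T + M * ((-t-T)/M))^2) * (T + M * ((-t-T)/M))^2) = _
    rw [h1, h2]; ring_nf
  have hint1 : Integrable (fun t : ℝ => g ((t - T)/M)) := by
    have i1 : Integrable fun x : ℝ => g (M⁻¹ * x) := hint.comp_mul_left' (inv_ne_zero hM.ne')
    have i2 : Integrable fun t : ℝ => g (M⁻¹ * (t + -T)) := i1.comp_add_right (-T)
    have heq : (fun t : ℝ => g (M⁻¹ * (t + -T))) = fun t : ℝ => g ((t - T)/M) := by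
      funext t; congr 1; field_simp; ring
    rwa [heq] at i2
  have hint2 : Integrable (fun t : ℝ => g ((-t - T)/M)) := by
    have := hint1.comp_neg
    simpa [neg_sub, sub_eq_add_neg] using this
  calc (∫ t : ℝ, (h ((t - T) / M) + h ((t + T) / M)) * Real.log (1 / 4 + t ^ 2) * t ^ 2)
      = ∫ t : ℝ, (g ((t - T)/M) + g ((-t - T)/M)) := by
        congr 1; funext t; rw [hgF t, hgneg t]; ring
    _ = (∫ t : ℝ, g ((t - T)/M)) + ∫ t : ℝ, g ((-t - T)/M) := integral_add hint1 hint2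
    _ = (∫ t : ℝ, g ((t - T)/M)) + ∫ t : ℝ, g ((t - T)/M) := by
        congr 1
        exact integral_neg_eq_self (fun u : ℝ => g ((u - T)/M)) volume
    _ = 2 * (∫ t : ℝ, g ((t - T)/M)) := by ring
    _ = 2 * (M * ∫ s : ℝ, g s) := by
        rw [aux_cov hM T (fun t => g ((t - T)/M))]
        have heq : (fun s : ℝ => g ((M * s + T - T)/M)) = fun s : ℝ => g s := by
          funext s; congr 1; field_simp; ring
        simp only [heq]
    _ = 2 * M * ∫ s : ℝ, g s := by ring

lemma aux_ptwise {μ : ℝ} (hμ1 : μ < 1) (s : ℝ) :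
    Tendsto (fun T : ℝ => (Real.log (1/4 + (T + T^μ * s)^2) * (T + T^μ * s)^2)
      / (T^2 * Real.log (T^2))) atTop (𝓝 1) := by
  have h0 : Tendsto (fun T : ℝ => T^(μ-1)) atTop (𝓝 0) := by
    have h := tendsto_rpow_neg_atTop (y := 1-μ) (by linarith)
    have heq : (fun T : ℝ => T ^ (μ-1)) = fun T : ℝ => T ^ (-(1-μ)) := by
      funext T; congr 1; ring
    rw [heq]; exact h
  have hq : Tendsto (fun T : ℝ => 1 + T^(μ-1)*s) atTop (𝓝 1) := by
    have h1 := (h0.mul_const s).const_add 1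
    simpa using h1
  have hq2 : Tendsto (fun T : ℝ => (1 + T^(μ-1)*s)^2) atTop (𝓝 1) := by
    simpa using hq.pow 2
  have hinv : Tendsto (fun T : ℝ => 1/(4*T^2)) atTop (𝓝 0) := by
    apply Tendsto.div_atTop tendsto_const_nhds
    exact (tendsto_pow_atTop two_ne_zero).const_mul_atTop (by norm_num : (0:ℝ) < 4)
  have hu : Tendsto (fun T : ℝ => 1/(4*T^2) + (1 + T^(μ-1)*s)^2) atTop (𝓝 1) := by
    simpa using hinv.add hq2
  have hlogu : Tendsto (fun T : ℝ => Real.log (1/(4*T^2) + (1 + T^(μ-1)*s)^2)) atTop (𝓝 0) := by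
    have hc := (Real.continuousAt_log (x := 1) one_ne_zero).tendsto.comp hu
    simpa [Real.log_one, Function.comp_def] using hc
  have hlogT2 : Tendsto (fun T : ℝ => Real.log (T^2)) atTop atTop :=
    Real.tendsto_log_atTop.comp (tendsto_pow_atTop two_ne_zero)
  have hratio : Tendsto (fun T : ℝ => Real.log (1/(4*T^2) + (1 + T^(μ-1)*s)^2)
      / Real.log (T^2)) atTop (𝓝 0) := hlogu.div_atTop hlogT2
  have hmain : Tendsto (fun T : ℝ => (1 + Real.log (1/(4*T^2) + (1 + T^(μ-1)*s)^2)
      / Real.log (T^2)) * (1 + T^(μ-1)*s)^2) atTop (𝓝 1) := by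
    have h2 := (hratio.const_add 1).mul hq2
    simpa using h2
  refine hmain.congr' ?_
  filter_upwards [eventually_ge_atTop (3:ℝ)] with T hT
  have hT0 : (0:ℝ) < T := by linarith
  set q := 1 + T^(μ-1)*s with hq'
  have hXq : T + T^μ * s = T * q := by
    rw [hq', Real.rpow_sub hT0, Real.rpow_one]; field_simp
  have hqpos : 0 < 1/(4*T^2) + q^2 := by positivity
  have hlogT2pos : 0 < Real.log (T^2) := Real.log_pos (by nlinarith)
  have hlogsplit : Real.log (1/4 + (T + T^μ*s)^2)
      = Real.log (T^2) + Real.log (1/(4*T^2) + q^2) := by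
    rw [← Real.log_mul (by positivity) hqpos.ne']
    congr 1
    rw [hXq]; field_simp
  rw [hlogsplit, hXq]
  set D := Real.log (T^2) with hD
  set L := Real.log (1/(4*T^2) + q^2) with hL
  clear_value q D L
  rw [mul_pow]
  field_simp


/-- for `h ∈ 𝓗⁺(S,N)` (even, nonnegative, not identically zero,
`|h(t)| ≪ e^{-π|t|}(|t|+1)^{-N}` with `N > 6`) and `M = T^μ`, `0 < μ < 1`,
with `h_{T,M}(t) = h((t-T)/M) + h((t+T)/M)` one has
`∫ h_{T,M}(t) log(1/4+t²) t² dt ∼ 2MT² log(T²) ∫ h(t) dt` as `T → ∞`. -/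
theorem hTM_log_eigenvalue_asymptotic
    (N : ℝ) (hN : 6 < N) (h : ℝ → ℝ)
    (heven : ∀ t : ℝ, h (-t) = h t)
    (hnonneg : ∀ t : ℝ, 0 ≤ h t)
    (hne : h ≠ 0)
    (hcont : Continuous h)
    (hdecay : ∃ C : ℝ, ∀ t : ℝ, h t ≤ C * Real.exp (-Real.pi * |t|) * (|t| + 1) ^ (-N))
    (μ : ℝ) (hμ : 0 < μ) (hμ1 : μ < 1) :
    Tendsto (fun T : ℝ =>
        (∫ t : ℝ, (h ((t - T) / T ^ μ) + h ((t + T) / T ^ μ)) * Real.log (1 / 4 + t ^ 2) * t ^ 2) /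
          (2 * T ^ μ * T ^ 2 * Real.log (T ^ 2) * ∫ t : ℝ, h t))
      atTop (nhds 1) := by
  obtain ⟨C, hC⟩ := hdecay
  have hne' : ∃ t₀ : ℝ, h t₀ ≠ 0 := by
    by_contra hx
    push_neg at hx
    exact hne (funext fun t => hx t)
  obtain ⟨t₀, ht₀⟩ := hne'
  have ht₀pos : 0 < h t₀ := lt_of_le_of_ne (hnonneg t₀) (Ne.symm ht₀)
  have he := Real.exp_pos (-Real.pi * |t₀|)
  have hr := Real.rpow_pos_of_pos (show (0:ℝ) < |t₀| + 1 by positivity) (-N)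
  have hCpos : 0 < C := by nlinarith [hC t₀, mul_pos he hr]
  have hhb : ∀ t : ℝ, h t ≤ C * Real.exp (-(Real.pi * |t|)) := by
    intro t
    have h1 : ((|t| + 1):ℝ) ^ (-N) ≤ 1 :=
      Real.rpow_le_one_of_one_le_of_nonpos (by linarith [abs_nonneg t]) (by linarith)
    have h3 : C * Real.exp (-Real.pi * |t|) * (|t|+1)^(-N) ≤ C * Real.exp (-Real.pi * |t|) * 1 :=
      mul_le_mul_of_nonneg_left h1 (by positivity)
    rw [mul_one, neg_mul] at h3
    have h2 := hC t
    rw [neg_mul] at h2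
    linarith
  have hint_h : Integrable h := by
    apply ((aux_int_exp Real.pi_pos).const_mul C).mono hcont.aestronglyMeasurable
    filter_upwards with t
    rw [Real.norm_eq_abs, Real.norm_eq_abs, abs_of_nonneg (hnonneg t)]
    exact (hhb t).trans (le_abs_self _)
  have hIpos : 0 < ∫ t : ℝ, h t := by
    rw [integral_pos_iff_support_of_nonneg hnonneg hint_h]
    have hopen : IsOpen (Function.support h) := by
      rw [Function.support_eq_preimage]
      exact isOpen_compl_singleton.preimage hcont
    exact hopen.measure_pos volume ⟨t₀, ht₀⟩
  have hpi3 : (0:ℝ) < Real.pi - 3 := by linarith [Real.pi_gt_three]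
  have hDCT : Tendsto (fun T : ℝ => ∫ s : ℝ,
      h s * ((Real.log (1/4 + (T + T^μ * s)^2) * (T + T^μ * s)^2) / (T^2 * Real.log (T^2))))
      atTop (𝓝 (∫ t : ℝ, h t)) := by
    apply tendsto_integral_filter_of_dominated_convergence
      (bound := fun s : ℝ => 2*C*Real.exp (-((Real.pi-3) * |s|)))
    · filter_upwards with T
      have hc2 : Continuous fun s : ℝ => 1/4 + (T + T^μ * s)^2 :=
        continuous_const.add ((continuous_const.add (continuous_const.mul continuous_id)).pow 2)
      exact (hcont.mul (((hc2.log (fun s => by positivity)).mul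
        ((continuous_const.add (continuous_const.mul continuous_id)).pow 2)).div_const
          _)).aestronglyMeasurable
    · filter_upwards [eventually_ge_atTop (3:ℝ)] with T hT
      filter_upwards with s
      have hlT : (0:ℝ) < Real.log (T^2) := Real.log_pos (by nlinarith)
      have hd : 0 < T^2 * Real.log (T^2) := mul_pos (by nlinarith) hlT
      have hkey := aux_key hCpos hnonneg hhb hμ1 hT s
      rw [Real.norm_eq_abs, show h s * ((Real.log (1/4 + (T + T^μ * s)^2) * (T + T^μ * s)^2)
        / (T^2 * Real.log (T^2)))
        = (h s * (Real.log (1/4 + (T + T^μ * s)^2) * (T + T^μ * s)^2)) / (T^2 * Real.log (T^2))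
        from by ring, abs_div, abs_of_pos hd]
      exact (div_le_iff₀ hd).mpr (by linarith [hkey])
    · exact (aux_int_exp hpi3).const_mul (2*C)
    · filter_upwards with s
      simpa using (aux_ptwise hμ1 s).const_mul (h s)
  have hfin : Tendsto (fun T : ℝ => (∫ s : ℝ,
      h s * ((Real.log (1/4 + (T + T^μ * s)^2) * (T + T^μ * s)^2) / (T^2 * Real.log (T^2))))
      / (∫ t : ℝ, h t)) atTop (𝓝 1) := by
    have hd := hDCT.div_const (∫ t : ℝ, h t)
    rwa [div_self hIpos.ne'] at hd
  refine hfin.congr' ?_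
  filter_upwards [eventually_ge_atTop (3:ℝ)] with T hT
  have hT0 : (0:ℝ) < T := by linarith
  have hMpos : 0 < T^μ := Real.rpow_pos_of_pos hT0 μ
  have hint := aux_int_hW hCpos hnonneg hcont hhb hμ1 hT
  have hnum := aux_num heven hMpos hint
  rw [hnum]
  have hpull : (∫ s : ℝ,
      h s * ((Real.log (1/4 + (T + T^μ * s)^2) * (T + T^μ * s)^2) / (T^2 * Real.log (T^2))))
      = (∫ s : ℝ, h s * (Real.log (1/4 + (T + T^μ * s)^2) * (T + T^μ * s)^2))
        / (T^2 * Real.log (T^2)) := by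
    rw [← integral_div]
    congr 1; funext s; ring
  rw [hpull]
  have h2M : (2:ℝ) * T^μ ≠ 0 := by positivity
  rw [div_div, show (2 * T ^ μ * T ^ 2 * Real.log (T ^ 2) * ∫ t : ℝ, h t)
    = (2 * T ^ μ) * (T ^ 2 * Real.log (T ^ 2) * ∫ t : ℝ, h t) from by ring,
    mul_div_mul_left _ _ h2M]
end

section
/- For the Euler-product Dirichlet series χ(s) = Σ_{c=1}^∞ μ(c)² / (c^s φ(c)), where μ is the Möbius function and φ Euler's totient, χ(s) converges for Re(s) > 0 and has the Laurent expansion χ(s) = 1/s + O(1) as s → 0⁺ along the real axis; equivalently, lim_{s→0⁺} (χ(s) − 1/s) exists and is finite. -/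
open Real Filter ArithmeticFunction

namespace ChiAux
open scoped LSeries.notation

noncomputable def F : ArithmeticFunction ℂ :=
  ⟨fun n => (moebius n : ℂ) ^ 2 / (Nat.totient n : ℂ), by simp⟩

noncomputable def G : ArithmeticFunction ℂ := ⟨fun n => (n : ℂ)⁻¹, by simp⟩

noncomputable def G' : ArithmeticFunction ℂ :=
  ⟨fun n => (moebius n : ℂ) / (n : ℂ), by simp⟩

noncomputable def H : ArithmeticFunction ℂ := F * G'

lemma F_apply (n : ℕ) : F n = (moebius n : ℂ) ^ 2 / (Nat.totient n : ℂ) := rfl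
lemma G_apply (n : ℕ) : G n = (n : ℂ)⁻¹ := rfl
lemma G'_apply (n : ℕ) : G' n = (moebius n : ℂ) / (n : ℂ) := rfl

lemma G_mul_G' : G * G' = 1 := by
  ext n
  rw [ArithmeticFunction.mul_apply]
  rcases eq_or_ne n 0 with rfl | hn
  · simp
  rw [Nat.sum_divisorsAntidiagonal (f := fun a b => G a * G' b)]
  have : ∀ d ∈ n.divisors, G d * G' (n / d) = (moebius (n / d) : ℂ) / (n : ℂ) := by
    intro d hd
    obtain ⟨hdvd, -⟩ := Nat.mem_divisors.mp hd
    have hd0 : d ≠ 0 := by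
      rintro rfl; exact hn (Nat.eq_zero_of_zero_dvd hdvd)
    have hmul : (d : ℂ) * ((n / d : ℕ) : ℂ) = (n : ℂ) := by
      rw [← Nat.cast_mul, Nat.mul_div_cancel' hdvd]
    rw [G_apply, G'_apply, div_eq_mul_inv, ← mul_assoc, mul_comm ((d:ℂ))⁻¹, mul_assoc,
      ← mul_inv, hmul, div_eq_mul_inv]
  rw [Finset.sum_congr rfl this, ← Finset.sum_div, Nat.sum_div_divisors n (fun d => (moebius d : ℂ))]
  have hmz : ∑ d ∈ n.divisors, (moebius d : ℂ) = if n = 1 then 1 else 0 := by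
    have h1 := congrArg (fun f : ArithmeticFunction ℂ => f n) (coe_moebius_mul_coe_zeta (R := ℂ))
    simp only [ArithmeticFunction.one_apply, ArithmeticFunction.coe_mul_zeta_apply,
      ArithmeticFunction.intCoe_apply] at h1
    exact h1
  rw [hmz, ArithmeticFunction.one_apply]
  rcases eq_or_ne n 1 with rfl | h1
  · norm_num
  · simp [h1]

lemma F_eq : H * G = F := by
  rw [H, mul_assoc, mul_comm G' G, G_mul_G', mul_one]

lemma isMultiplicative_F : F.IsMultiplicative := by
  refine ⟨by simp [F_apply], fun {m n} h => ?_⟩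
  rw [F_apply, F_apply, F_apply,
    isMultiplicative_moebius.map_mul_of_coprime h, Nat.totient_mul h]
  push_cast
  rw [mul_pow]
  exact div_mul_div_comm _ _ _ _ |>.symm

lemma isMultiplicative_G' : G'.IsMultiplicative := by
  refine ⟨by simp [G'_apply], fun {m n} h => ?_⟩
  rw [G'_apply, G'_apply, G'_apply,
    isMultiplicative_moebius.map_mul_of_coprime h]
  push_cast
  exact div_mul_div_comm _ _ _ _ |>.symm

lemma isMultiplicative_H : H.IsMultiplicative := isMultiplicative_F.mul isMultiplicative_G'

lemma F_apply_prime {p : ℕ} (hp : p.Prime) : F p = ((p : ℂ) - 1)⁻¹ := by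
  rw [F_apply, moebius_apply_prime hp, Nat.totient_prime hp]
  rw [Nat.cast_sub hp.one_lt.le]
  norm_num

lemma F_apply_prime_pow {p k : ℕ} (hp : p.Prime) (hk : 2 ≤ k) : F (p ^ k) = 0 := by
  rw [F_apply, moebius_apply_prime_pow hp (by omega), if_neg (by omega)]
  simp

lemma G'_apply_prime {p : ℕ} (hp : p.Prime) : G' p = -(p : ℂ)⁻¹ := by
  rw [G'_apply, moebius_apply_prime hp]
  push_cast
  ring

lemma G'_apply_prime_pow {p k : ℕ} (hp : p.Prime) (hk : 2 ≤ k) : G' (p ^ k) = 0 := by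
  rw [G'_apply, moebius_apply_prime_pow hp (by omega), if_neg (by omega)]
  simp

lemma H_apply_prime_pow {p k : ℕ} (hp : p.Prime) (hk : 1 ≤ k) :
    H (p ^ k) = ∑ i ∈ Finset.range (k + 1), F (p ^ i) * G' (p ^ (k - i)) := by
  rw [H, ArithmeticFunction.mul_apply,
    Nat.sum_divisorsAntidiagonal (f := fun a b => F a * G' b),
    Nat.sum_divisors_prime_pow hp]
  refine Finset.sum_congr rfl fun i hi => ?_
  rw [Finset.mem_range] at hi
  rw [Nat.pow_div (by omega) hp.pos]

lemma H_apply_prime {p : ℕ} (hp : p.Prime) : H p = ((p : ℂ) - 1)⁻¹ - (p : ℂ)⁻¹ := by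
  have := H_apply_prime_pow hp (k := 1) le_rfl
  simp only [pow_one] at this
  rw [this, Finset.sum_range_succ, Finset.sum_range_one]
  simp [pow_zero, isMultiplicative_F.map_one, isMultiplicative_G'.map_one,
    F_apply_prime hp, G'_apply_prime hp, pow_one]
  ring

lemma H_apply_prime_sq {p : ℕ} (hp : p.Prime) :
    H (p ^ 2) = -(((p : ℂ) - 1)⁻¹ * (p : ℂ)⁻¹) := by
  rw [H_apply_prime_pow hp (by norm_num)]
  rw [Finset.sum_range_succ, Finset.sum_range_succ, Finset.sum_range_one]
  norm_num only [pow_zero, pow_one, isMultiplicative_F.map_one, isMultiplicative_G'.map_one,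
    F_apply_prime hp, G'_apply_prime hp, F_apply_prime_pow hp le_rfl,
    G'_apply_prime_pow hp le_rfl]
  ring

lemma H_apply_prime_pow_ge {p k : ℕ} (hp : p.Prime) (hk : 3 ≤ k) : H (p ^ k) = 0 := by
  rw [H_apply_prime_pow hp (by omega)]
  refine Finset.sum_eq_zero fun i hi => ?_
  rw [Finset.mem_range] at hi
  rcases le_or_gt 2 i with h2 | h2
  · rw [F_apply_prime_pow hp h2, zero_mul]
  · rw [G'_apply_prime_pow hp (by omega), mul_zero]

noncomputable def fbar : ℕ → ℝ := fun n => ‖H n‖ * (n : ℝ) ^ (4⁻¹ : ℝ)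

lemma fbar_nonneg (n : ℕ) : 0 ≤ fbar n :=
  mul_nonneg (norm_nonneg _) (Real.rpow_nonneg (Nat.cast_nonneg _) _)

lemma fbar_zero : fbar 0 = 0 := by simp [fbar]

lemma fbar_one : fbar 1 = 1 := by
  simp [fbar, isMultiplicative_H.map_one]

lemma fbar_mul {m n : ℕ} (h : Nat.Coprime m n) : fbar (m * n) = fbar m * fbar n := by
  unfold fbar
  rw [isMultiplicative_H.map_mul_of_coprime h, norm_mul, Nat.cast_mul,
    Real.mul_rpow (Nat.cast_nonneg _) (Nat.cast_nonneg _)]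
  ring

lemma norm_H_prime {p : ℕ} (hp : p.Prime) :
    ‖H p‖ = ((p : ℝ) * ((p : ℝ) - 1))⁻¹ := by
  have hP : ((p : ℂ)) ≠ 0 := Nat.cast_ne_zero.mpr hp.pos.ne'
  have hP1 : ((p : ℂ)) - 1 ≠ 0 := sub_ne_zero.mpr (Nat.cast_ne_one.mpr hp.one_lt.ne')
  have h' : H p = ((p : ℂ) * ((p : ℂ) - 1))⁻¹ := by
    rw [H_apply_prime hp]
    field_simp
    ring
  rw [h']
  have : ((p : ℂ) * ((p : ℂ) - 1)) = (((p : ℝ) * ((p : ℝ) - 1) : ℝ) : ℂ) := by push_cast; ring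
  rw [this, norm_inv, Complex.norm_real, Real.norm_of_nonneg]
  have h2 : (2 : ℝ) ≤ (p : ℝ) := by exact_mod_cast hp.two_le
  nlinarith

lemma norm_H_prime_sq {p : ℕ} (hp : p.Prime) :
    ‖H (p ^ 2)‖ = ((p : ℝ) * ((p : ℝ) - 1))⁻¹ := by
  rw [H_apply_prime_sq hp, norm_neg]
  have : (((p : ℂ)) - 1)⁻¹ * ((p : ℂ))⁻¹ = (((p : ℂ)) * (((p : ℂ)) - 1))⁻¹ := by
    rw [mul_inv]; ring
  rw [this]
  have h2 : ((p : ℂ) * ((p : ℂ) - 1)) = (((p : ℝ) * ((p : ℝ) - 1) : ℝ) : ℂ) := by push_cast; ring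
  rw [h2, norm_inv, Complex.norm_real, Real.norm_of_nonneg]
  have h2 : (2 : ℝ) ≤ (p : ℝ) := by exact_mod_cast hp.two_le
  nlinarith

lemma fbar_prime_pow_ge {p k : ℕ} (hp : p.Prime) (hk : 3 ≤ k) : fbar (p ^ k) = 0 := by
  simp [fbar, H_apply_prime_pow_ge hp hk]

lemma tsum_fbar_le {p : ℕ} (hp : p.Prime) :
    ∑' k, fbar (p ^ k) ≤ 1 + 4 * (p : ℝ) ^ (-(3 / 2) : ℝ) := by
  have hx : (2 : ℝ) ≤ (p : ℝ) := by exact_mod_cast hp.two_le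
  have hx0 : (0 : ℝ) < (p : ℝ) := by linarith
  rw [tsum_eq_sum (s := Finset.range 3)
    (fun k hk => fbar_prime_pow_ge hp (by simpa using Finset.mem_range.not.mp hk))]
  rw [Finset.sum_range_succ, Finset.sum_range_succ, Finset.sum_range_one, pow_zero, pow_one,
    fbar_one]
  have key : fbar p + fbar (p ^ 2) ≤ 4 * (p : ℝ) ^ (-(3 / 2) : ℝ) := by
    have h1 : fbar p = ((p : ℝ) * ((p : ℝ) - 1))⁻¹ * (p : ℝ) ^ (4⁻¹ : ℝ) := by
      rw [fbar, norm_H_prime hp]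
    have h2 : fbar (p ^ 2) = ((p : ℝ) * ((p : ℝ) - 1))⁻¹ * (p : ℝ) ^ (2⁻¹ : ℝ) := by
      rw [fbar, norm_H_prime_sq hp]
      congr 1
      push_cast
      rw [← Real.rpow_natCast ((p:ℝ)) 2, ← Real.rpow_mul hx0.le]
      norm_num
    have ha : (p : ℝ) ^ (4⁻¹ : ℝ) ≤ (p : ℝ) ^ (2⁻¹ : ℝ) :=
      Real.rpow_le_rpow_of_exponent_le (by linarith) (by norm_num)
    have hb : (p : ℝ) ^ (-(3 / 2) : ℝ) = (p : ℝ) ^ (2⁻¹ : ℝ) * ((p : ℝ) ^ 2)⁻¹ := by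
      rw [← Real.rpow_natCast ((p:ℝ)) 2, ← Real.rpow_neg hx0.le, ← Real.rpow_add hx0]
      norm_num
    have hinv : ((p : ℝ) * ((p : ℝ) - 1))⁻¹ ≤ 2 * ((p : ℝ) ^ 2)⁻¹ := by
      have h3 : (0:ℝ) < (p : ℝ) ^ 2 / 2 := by positivity
      have h4 : (p : ℝ) ^ 2 / 2 ≤ (p : ℝ) * ((p : ℝ) - 1) := by nlinarith
      calc ((p : ℝ) * ((p : ℝ) - 1))⁻¹ ≤ ((p : ℝ) ^ 2 / 2)⁻¹ := by
            exact inv_anti₀ h3 h4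
        _ = 2 * ((p : ℝ) ^ 2)⁻¹ := by rw [inv_div]; ring
    have hrnn : (0:ℝ) ≤ (p : ℝ) ^ (2⁻¹ : ℝ) := Real.rpow_nonneg hx0.le _
    calc fbar p + fbar (p ^ 2)
        ≤ ((p : ℝ) * ((p : ℝ) - 1))⁻¹ * (p : ℝ) ^ (2⁻¹ : ℝ)
          + ((p : ℝ) * ((p : ℝ) - 1))⁻¹ * (p : ℝ) ^ (2⁻¹ : ℝ) := by
          rw [h1, h2]
          have : (0:ℝ) ≤ ((p : ℝ) * ((p : ℝ) - 1))⁻¹ := by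
            have : (0:ℝ) < (p : ℝ) * ((p : ℝ) - 1) := by nlinarith
            positivity
          gcongr
      _ = 2 * ((p : ℝ) * ((p : ℝ) - 1))⁻¹ * (p : ℝ) ^ (2⁻¹ : ℝ) := by ring
      _ ≤ 2 * (2 * ((p : ℝ) ^ 2)⁻¹) * (p : ℝ) ^ (2⁻¹ : ℝ) := by gcongr
      _ = 4 * (p : ℝ) ^ (-(3 / 2) : ℝ) := by rw [hb]; ring
  linarith

lemma summable_of_multiplicative {f : ℕ → ℝ} (h0 : f 0 = 0) (h1 : f 1 = 1)
    (hnn : ∀ n, 0 ≤ f n) (hmul : ∀ {m n : ℕ}, Nat.Coprime m n → f (m * n) = f m * f n)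
    {c : ℕ → ℝ} (hcnn : ∀ n, 0 ≤ c n) (hcs : Summable c)
    (hfin : ∀ p : ℕ, p.Prime → ∀ k, 3 ≤ k → f (p ^ k) = 0)
    (hb : ∀ p : ℕ, p.Prime → ∑' k, f (p ^ k) ≤ 1 + c p) :
    Summable f := by
  have hsumnorm : ∀ {p : ℕ}, p.Prime → Summable (fun k : ℕ => ‖f (p ^ k)‖) := by
    intro p hp
    refine summable_of_ne_finset_zero (s := Finset.range 3) fun k hk => ?_
    rw [hfin p hp k (by simpa using Finset.mem_range.not.mp hk), norm_zero]
  refine summable_of_sum_le (c := Real.exp (∑' n, c n)) hnn fun u => ?_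
  set S := Finset.range (u.sup _root_.id + 1) with hS
  obtain ⟨-, hHS⟩ := EulerProduct.summable_and_hasSum_factoredNumbers_prod_filter_prime_tsum
    h1 (fun {m n} h => hmul h) hsumnorm S
  have hmem : ∀ n ∈ u, n ≠ 0 → n ∈ Nat.factoredNumbers S := by
    intro n hn hn0
    refine Nat.mem_factoredNumbers.mpr ⟨hn0, fun p hp => ?_⟩
    have hdvd : p ∣ n := Nat.dvd_of_mem_primeFactorsList hp
    have hpn : p ≤ n := Nat.le_of_dvd (Nat.pos_of_ne_zero hn0) hdvd
    have : n ≤ u.sup _root_.id := Finset.le_sup (f := _root_.id) hn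
    exact Finset.mem_range.mpr (by omega)
  have hind : ∑ n ∈ u, f n = ∑ n ∈ u, (Nat.factoredNumbers S).indicator f n := by
    refine Finset.sum_congr rfl fun n hn => ?_
    rcases eq_or_ne n 0 with rfl | hn0
    · rw [Set.indicator_of_notMem (fun hmem0 => (Nat.ne_zero_of_mem_factoredNumbers hmem0) rfl), h0]
    · rw [Set.indicator_of_mem (hmem n hn hn0)]
  have hsummable_ind : Summable ((Nat.factoredNumbers S).indicator f) := by
    rw [← summable_subtype_iff_indicator]
    exact hHS.summable
  have hle1 : ∑ n ∈ u, f n ≤ ∑' n, (Nat.factoredNumbers S).indicator f n := by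
    rw [hind]
    exact Summable.sum_le_tsum u (fun i _ => Set.indicator_nonneg (fun n _ => hnn n) i) hsummable_ind
  have heq : ∑' n, (Nat.factoredNumbers S).indicator f n
      = ∏ p ∈ S with p.Prime, ∑' k, f (p ^ k) := by
    rw [← tsum_subtype]
    exact hHS.tsum_eq
  have hle2 : ∏ p ∈ S with p.Prime, ∑' k, f (p ^ k)
      ≤ Real.exp (∑ p ∈ S with p.Prime, c p) := by
    rw [Real.exp_sum]
    refine Finset.prod_le_prod (fun i _ => tsum_nonneg fun k => hnn _) fun i hi => ?_
    have hip : i.Prime := (Finset.mem_filter.mp hi).2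
    refine (hb i hip).trans ?_
    rw [add_comm]
    exact Real.add_one_le_exp (c i)
  have hle3 : ∑ p ∈ S with p.Prime, c p ≤ ∑' n, c n :=
    Summable.sum_le_tsum _ (fun i _ => hcnn i) hcs
  calc ∑ n ∈ u, f n ≤ ∏ p ∈ S with p.Prime, ∑' k, f (p ^ k) := by rw [← heq]; exact hle1
    _ ≤ Real.exp (∑ p ∈ S with p.Prime, c p) := hle2
    _ ≤ Real.exp (∑' n, c n) := Real.exp_le_exp.mpr hle3

lemma summable_fbar : Summable fbar := by
  refine summable_of_multiplicative fbar_zero fbar_one fbar_nonneg (fun {m n} h => fbar_mul h)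
    (c := fun n => 4 * (n : ℝ) ^ (-(3 / 2) : ℝ))
    (fun n => by positivity) ?_ (fun p hp k hk => fbar_prime_pow_ge hp hk)
    (fun p hp => tsum_fbar_le hp)
  exact (Real.summable_nat_rpow.mpr (by norm_num)).mul_left 4

lemma norm_H_le (n : ℕ) : ‖H n‖ ≤ fbar n := by
  rcases eq_or_ne n 0 with rfl | hn
  · simp [fbar]
  have h1 : (1 : ℝ) ≤ (n : ℝ) := by exact_mod_cast Nat.one_le_iff_ne_zero.mpr hn
  calc ‖H n‖ = ‖H n‖ * 1 := (mul_one _).symm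
    _ ≤ ‖H n‖ * (n : ℝ) ^ (4⁻¹ : ℝ) := by
        gcongr
        exact Real.one_le_rpow h1 (by norm_num)
    _ = fbar n := rfl

lemma summable_norm_H : Summable (fun n => ‖H n‖) :=
  Summable.of_nonneg_of_le (fun n => norm_nonneg _) norm_H_le summable_fbar

lemma LSeriesSummable_H {s : ℂ} (hs : (-4⁻¹ : ℝ) ≤ s.re) : LSeriesSummable ↗H s := by
  refine Summable.of_norm ?_
  refine Summable.of_nonneg_of_le (fun n => norm_nonneg _) (fun n => ?_) summable_fbar
  rw [LSeries.norm_term_eq]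
  rcases eq_or_ne n 0 with rfl | hn
  · simp [fbar_nonneg 0]
  rw [if_neg hn]
  have h1 : (1 : ℝ) ≤ (n : ℝ) := by exact_mod_cast Nat.one_le_iff_ne_zero.mpr hn
  rw [div_eq_mul_inv, ← Real.rpow_neg (by linarith)]
  unfold fbar
  gcongr
  · linarith

lemma abscissa_H : LSeries.abscissaOfAbsConv ↗H ≤ ((-4⁻¹ : ℝ) : EReal) := by
  have := (LSeriesSummable_H (s := ((-4⁻¹ : ℝ) : ℂ)) (by simp)).abscissaOfAbsConv_le
  simpa using this

lemma LSeries_H_zero : LSeries ↗H 0 = 1 := by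
  have h1 : LSeries ↗H 0 = ∑' n, H n := by
    refine tsum_congr fun n => ?_
    rcases eq_or_ne n 0 with rfl | hn
    · rw [LSeries.term_zero, ArithmeticFunction.map_zero]
    · rw [LSeries.term_of_ne_zero hn, Complex.cpow_zero, div_one]
  rw [h1, ← isMultiplicative_H.eulerProduct_tprod summable_norm_H]
  have hval : ∀ p : Nat.Primes, ∑' e : ℕ, H ((p : ℕ) ^ e) = 1 := by
    intro p
    have hp := p.2
    rw [tsum_eq_sum (s := Finset.range 3)
      (fun k hk => H_apply_prime_pow_ge hp (by simpa using Finset.mem_range.not.mp hk))]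
    rw [Finset.sum_range_succ, Finset.sum_range_succ, Finset.sum_range_one, pow_zero, pow_one,
      isMultiplicative_H.map_one, H_apply_prime hp, H_apply_prime_sq hp]
    have hP : (((p : ℕ) : ℂ)) ≠ 0 := Nat.cast_ne_zero.mpr hp.pos.ne'
    have hP1 : (((p : ℕ) : ℂ)) - 1 ≠ 0 := sub_ne_zero.mpr (Nat.cast_ne_one.mpr hp.one_lt.ne')
    field_simp
    ring
  calc ∏' p : Nat.Primes, ∑' e : ℕ, H ((p : ℕ) ^ e) = ∏' _ : Nat.Primes, (1 : ℂ) :=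
        tprod_congr hval
    _ = 1 := tprod_one

lemma exists_hasDerivAt_H : ∃ D : ℂ, HasDerivAt (LSeries ↗H) D 0 := by
  refine ⟨_, LSeries_hasDerivAt ?_⟩
  refine lt_of_le_of_lt abscissa_H ?_
  rw [Complex.zero_re]
  exact_mod_cast (by norm_num : (-4⁻¹ : ℝ) < 0)

lemma term_G (s : ℂ) (n : ℕ) : LSeries.term ↗G s n = LSeries.term 1 (s + 1) n := by
  rcases eq_or_ne n 0 with rfl | hn
  · rw [LSeries.term_zero, LSeries.term_zero]
  · rw [LSeries.term_of_ne_zero hn, LSeries.term_of_ne_zero hn, G_apply, Pi.one_apply,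
      Complex.cpow_add _ _ (Nat.cast_ne_zero.mpr hn), Complex.cpow_one, div_eq_mul_inv,
      div_eq_mul_inv, one_mul, mul_inv, mul_comm ((n : ℂ))⁻¹]

lemma LSeriesSummable_G {s : ℂ} (hs : 0 < s.re) : LSeriesSummable ↗G s := by
  have : (1 : ℝ) < (s + 1).re := by simp [Complex.add_re]; linarith
  exact (LSeriesSummable_one_iff.mpr this).congr fun n => (term_G s n).symm

lemma LSeries_G {s : ℂ} (hs : 0 < s.re) : LSeries ↗G s = riemannZeta (1 + s) := by
  have h1 : (1 : ℝ) < (s + 1).re := by simp [Complex.add_re]; linarith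
  rw [LSeries, tsum_congr (term_G s), ← LSeries]
  rw [LSeries_one_eq_riemannZeta h1, add_comm]

noncomputable def aterm (s : ℝ) (n : ℕ) : ℝ :=
  ((moebius n : ℝ)) ^ 2 / ((n : ℝ) ^ s * (Nat.totient n : ℝ))

lemma aterm_zero (s : ℝ) : aterm s 0 = 0 := by
  simp [aterm]

lemma aterm_eq {s : ℝ} (n : ℕ) : ((aterm s n : ℝ) : ℂ) = LSeries.term ↗F (s : ℂ) n := by
  rcases eq_or_ne n 0 with rfl | hn
  · rw [aterm_zero, LSeries.term_zero, Complex.ofReal_zero]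
  · rw [LSeries.term_of_ne_zero hn, F_apply, aterm]
    rw [div_mul_eq_div_div_swap]
    have hc : (((n : ℝ) ^ s : ℝ) : ℂ) = (n : ℂ) ^ (s : ℂ) := by
      rw [Complex.ofReal_cpow (Nat.cast_nonneg n)]
      norm_num
    push_cast [hc]
    ring

lemma LSeriesSummable_F {s : ℝ} (hs : 0 < s) : LSeriesSummable ↗F (s : ℂ) := by
  rw [← F_eq]
  exact LSeriesSummable_mul
    (LSeriesSummable_H (by rw [Complex.ofReal_re]; linarith))
    (LSeriesSummable_G (by rw [Complex.ofReal_re]; linarith))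

lemma summable_aterm {s : ℝ} (hs : 0 < s) : Summable (aterm s) :=
  Complex.summable_ofReal.mp ((LSeriesSummable_F hs).congr fun n => (aterm_eq n).symm)

lemma tsum_aterm {s : ℝ} (hs : 0 < s) :
    ((∑' c : ℕ+, aterm s (c : ℕ) : ℝ) : ℂ) = LSeries ↗F (s : ℂ) := by
  have hpnat : ∑' c : ℕ+, aterm s (c : ℕ) = ∑' n : ℕ, aterm s n := by
    have e := Equiv.pnatEquivNat.symm.tsum_eq (f := fun c : ℕ+ => aterm s (c : ℕ))
    have h2 : ∑' n : ℕ, aterm s n = aterm s 0 + ∑' n : ℕ, aterm s (n + 1) :=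
      (summable_aterm hs).tsum_eq_zero_add
    rw [h2, aterm_zero, zero_add, ← e]
    refine tsum_congr fun n => ?_
    have h3 : ((Equiv.pnatEquivNat.symm n : ℕ+) : ℕ) = n + 1 := by
      simp [Equiv.pnatEquivNat]
    rw [h3]
  rw [hpnat, Complex.ofReal_tsum]
  exact tsum_congr fun n => aterm_eq n

end ChiAux

/-- the Dirichlet series `χ(s) = Σ_{c≥1} μ(c)²/(c^s φ(c))` converges for
`s > 0` and has the Laurent expansion `χ(s) = 1/s + O(1)` as `s → 0⁺`; i.e.
`lim_{s→0⁺} (χ(s) - 1/s)` exists and is finite. -/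
theorem chi_series_laurent :
    (∀ s : ℝ, 0 < s →
      Summable fun c : ℕ+ =>
        ((moebius (c : ℕ) : ℝ)) ^ 2 / ((c : ℝ) ^ s * (Nat.totient (c : ℕ) : ℝ))) ∧
    ∃ L : ℝ, Tendsto (fun s : ℝ =>
        (∑' c : ℕ+, ((moebius (c : ℕ) : ℝ)) ^ 2 / ((c : ℝ) ^ s * (Nat.totient (c : ℕ) : ℝ)))
          - 1 / s)
      (nhdsWithin 0 (Set.Ioi 0)) (nhds L) := by
  constructor
  · intro s hs
    exact (ChiAux.summable_aterm hs).comp_injective PNat.coe_injective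
  obtain ⟨D, hD⟩ := ChiAux.exists_hasDerivAt_H
  refine ⟨(1 * (Real.eulerMascheroniConstant : ℂ) + D).re, ?_⟩
  have h0 : Tendsto (fun s : ℝ => (s : ℂ)) (nhdsWithin 0 (Set.Ioi 0)) (nhds 0) := by
    have := (Complex.continuous_ofReal.tendsto 0).mono_left
      (nhdsWithin_le_nhds (s := Set.Ioi (0:ℝ)))
    simpa using this
  have h1 : Tendsto (fun s : ℝ => (s : ℂ)) (nhdsWithin 0 (Set.Ioi 0)) (nhdsWithin 0 {(0:ℂ)}ᶜ) := by
    refine tendsto_nhdsWithin_of_tendsto_nhds_of_eventually_within _ h0 ?_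
    filter_upwards [self_mem_nhdsWithin] with s hs
    simp only [Set.mem_compl_iff, Set.mem_singleton_iff]
    exact_mod_cast ne_of_gt hs
  have h2 : Tendsto (fun s : ℝ => 1 + (s : ℂ)) (nhdsWithin 0 (Set.Ioi 0))
      (nhdsWithin 1 {(1:ℂ)}ᶜ) := by
    refine tendsto_nhdsWithin_of_tendsto_nhds_of_eventually_within _ ?_ ?_
    · have hc : Tendsto (fun z : ℂ => 1 + z) (nhds 0) (nhds 1) := by
        have h' : Tendsto (fun z : ℂ => z) (nhds 0) (nhds 0) := fun _ h => h
        simpa using (tendsto_const_nhds (x := (1:ℂ)) (f := nhds (0:ℂ))).add h' 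
      exact hc.comp h0
    · filter_upwards [self_mem_nhdsWithin] with s hs
      simp only [Set.mem_compl_iff, Set.mem_singleton_iff]
      have : (s : ℂ) ≠ 0 := by exact_mod_cast ne_of_gt hs
      intro h
      exact this (by linear_combination h)
  have hζ : Tendsto (fun s : ℝ => riemannZeta (1 + (s : ℂ)) - 1 / (s : ℂ))
      (nhdsWithin 0 (Set.Ioi 0)) (nhds (Real.eulerMascheroniConstant : ℂ)) := by
    have := tendsto_riemannZeta_sub_one_div.comp h2
    refine this.congr fun s => ?_
    simp only [Function.comp_apply, add_sub_cancel_left]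
  have hHc : Tendsto (fun s : ℝ => LSeries (fun n : ℕ => (ChiAux.H n : ℂ)) (s : ℂ)) (nhdsWithin 0 (Set.Ioi 0))
      (nhds 1) := by
    have := (hD.continuousAt.tendsto).comp h0
    rwa [ChiAux.LSeries_H_zero] at this
  have hslope : Tendsto (fun s : ℝ => (LSeries (fun n : ℕ => (ChiAux.H n : ℂ)) (s : ℂ) - 1) / (s : ℂ))
      (nhdsWithin 0 (Set.Ioi 0)) (nhds D) := by
    have hs := (hasDerivAt_iff_tendsto_slope.mp hD).comp h1
    refine hs.congr fun s => ?_
    simp only [Function.comp_apply, slope_def_field, ChiAux.LSeries_H_zero, sub_zero]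
  have hkey : Tendsto (fun s : ℝ => LSeries (fun n : ℕ => (ChiAux.F n : ℂ)) (s : ℂ) - 1 / (s : ℂ))
      (nhdsWithin 0 (Set.Ioi 0)) (nhds (1 * (Real.eulerMascheroniConstant : ℂ) + D)) := by
    have hcomb := (hHc.mul hζ).add hslope
    refine Tendsto.congr' ?_ hcomb
    filter_upwards [self_mem_nhdsWithin] with s hs
    have hs0 : (0 : ℝ) < s := hs
    have hFmul : LSeries (fun n : ℕ => (ChiAux.F n : ℂ)) (s : ℂ)
        = LSeries (fun n : ℕ => (ChiAux.H n : ℂ)) (s : ℂ) * riemannZeta (1 + (s : ℂ)) := by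
      rw [← ChiAux.F_eq,
        LSeries_mul' (ChiAux.LSeriesSummable_H (by rw [Complex.ofReal_re]; linarith))
          (ChiAux.LSeriesSummable_G (by rw [Complex.ofReal_re]; linarith)),
        ChiAux.LSeries_G (by rw [Complex.ofReal_re]; linarith)]
    rw [hFmul]
    have hsne : (s : ℂ) ≠ 0 := by exact_mod_cast ne_of_gt hs0
    field_simp
    ring
  have hre := (Complex.continuous_re.tendsto _).comp hkey
  refine Tendsto.congr' ?_ hre
  filter_upwards [self_mem_nhdsWithin] with s hs
  have hchi := ChiAux.tsum_aterm hs
  have h1s : (1 / (s : ℂ)) = ((1 / s : ℝ) : ℂ) := by push_cast; ring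
  simp only [Function.comp_apply]
  rw [← hchi, h1s, ← Complex.ofReal_sub, Complex.ofReal_re]
  rfl
end

section
/- For ν, μ ∈ ℂ with Re(μ) > |Re(ν)|, the Mellin transform of the K-Bessel function satisfies ∫₀^∞ K_ν(x) x^{μ−1} dx = 2^{μ−2} Γ((μ−ν)/2) Γ((μ+ν)/2). -/
open Real Complex MeasureTheory

/-- The modified Bessel function of the second kind,
`K_ν(x) = (1/2) ∫_{-∞}^∞ e^{-x cosh t} e^{-νt} dt` for `x > 0`. -/
noncomputable def besselK (ν : ℂ) (x : ℝ) : ℂ :=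
  (1 / 2) * ∫ t : ℝ, Complex.exp (-(x : ℂ) * Real.cosh t) * Complex.exp (-ν * t)

open Set
private lemma ofReal_eq_cexp {x : ℝ} (hx : 0 < x) : (x : ℂ) = Complex.exp (Real.log x) := by
  rw [← Complex.ofReal_exp, Real.exp_log hx]

private lemma cpow_pos_eq {x : ℝ} (hx : 0 < x) (s : ℂ) :
    (x : ℂ) ^ s = Complex.exp (s * Real.log x) := by
  rw [Complex.cpow_def_of_ne_zero (by exact_mod_cast hx.ne'), Complex.ofReal_log hx.le,
    mul_comm]

private lemma exp_abs_le_two_cosh (t : ℝ) : Real.exp |t| ≤ 2 * Real.cosh t := by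
  rw [Real.cosh_eq]
  rcases abs_cases t with ⟨h1, _⟩ | ⟨h1, _⟩ <;> rw [h1] <;>
    [nlinarith [Real.exp_pos (-t)]; nlinarith [Real.exp_pos t]]

private lemma integrable_exp_neg_abs : Integrable (fun t : ℝ => Real.exp (-|t|)) := by
  have h1 : IntegrableOn (fun t : ℝ => Real.exp (-|t|)) (Iic 0) := by
    apply (integrableOn_exp_Iic 0).congr_fun (fun x hx => ?_) measurableSet_Iic
    rw [abs_of_nonpos (mem_Iic.mp hx), neg_neg]
  have h2 : IntegrableOn (fun t : ℝ => Real.exp (-|t|)) (Ioi 0) := by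
    apply (exp_neg_integrableOn_Ioi 0 one_pos).congr_fun (fun x hx => ?_) measurableSet_Ioi
    rw [abs_of_pos (mem_Ioi.mp hx), neg_one_mul]
  have := h1.union h2
  rwa [Iic_union_Ioi, integrableOn_univ] at this

private lemma integrable_exp_neg_mul_abs {b : ℝ} (hb : 0 < b) :
    Integrable (fun t : ℝ => Real.exp (-(b * |t|))) := by
  have := (integrable_comp_mul_left_iff (fun t : ℝ => Real.exp (-|t|)) hb.ne').mpr
    integrable_exp_neg_abs
  refine this.congr (Filter.Eventually.of_forall fun t => ?_)
  simp only [abs_mul, abs_of_pos hb]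

private lemma integrable_aux {p q : ℝ} (h : |q| < p) :
    Integrable (fun t : ℝ => Real.exp (-q * t) * (1 / Real.cosh t) ^ p) := by
  have hp : 0 < p := lt_of_le_of_lt (abs_nonneg q) h
  have hb : 0 < p - |q| := by linarith
  have hg : Integrable (fun t : ℝ => 2 ^ p * Real.exp (-((p - |q|) * |t|))) :=
    (integrable_exp_neg_mul_abs hb).const_mul _
  refine hg.mono' ?_ (Filter.Eventually.of_forall fun t => ?_)
  · apply Continuous.aestronglyMeasurable
    exact (Real.continuous_exp.comp (continuous_const.mul continuous_id)).mul
      ((continuous_const.div Real.continuous_cosh (fun t => (Real.cosh_pos t).ne')).rpow_const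
        (fun t => Or.inl (by positivity : (0:ℝ) < 1 / Real.cosh t).ne'))
  · have hc := Real.cosh_pos t
    have h1 : (1 / Real.cosh t) ^ p ≤ (2 * Real.exp (-|t|)) ^ p := by
      apply Real.rpow_le_rpow (by positivity) _ hp.le
      rw [div_le_iff₀ hc]
      calc (1:ℝ) = Real.exp (-|t|) * Real.exp |t| := by
            rw [← Real.exp_add, neg_add_cancel, Real.exp_zero]
        _ ≤ Real.exp (-|t|) * (2 * Real.cosh t) := by
            exact mul_le_mul_of_nonneg_left (exp_abs_le_two_cosh t) (Real.exp_pos _).le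
        _ = 2 * Real.exp (-|t|) * Real.cosh t := by ring
    have h2 : Real.exp (-q * t) ≤ Real.exp (|q| * |t|) := by
      apply Real.exp_le_exp.mpr
      calc -q * t ≤ |(-q) * t| := le_abs_self _
        _ = |q| * |t| := by rw [abs_mul, abs_neg]
    have hnn : 0 ≤ Real.exp (-q * t) * (1 / Real.cosh t) ^ p := by positivity
    rw [Real.norm_of_nonneg hnn]
    calc Real.exp (-q * t) * (1 / Real.cosh t) ^ p
        ≤ Real.exp (|q| * |t|) * (2 * Real.exp (-|t|)) ^ p := by
          exact mul_le_mul h2 h1 (by positivity) (by positivity)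
      _ = 2 ^ p * Real.exp (-((p - |q|) * |t|)) := by
          rw [Real.mul_rpow (by norm_num) (Real.exp_pos _).le, ← Real.exp_mul,
            mul_left_comm, ← Real.exp_add]
          ring_nf

private lemma integrableOn_cpow_exp {μ : ℂ} (hμ : 0 < μ.re) {r : ℝ} (hr : 0 < r) :
    IntegrableOn (fun x : ℝ => (x : ℂ) ^ (μ - 1) * Complex.exp (-(r * x))) (Ioi 0) := by
  have h0 : IntegrableOn (fun x : ℝ => ↑(Real.exp (-x)) * (x : ℂ) ^ (μ - 1)) (Ioi 0) :=
    Complex.GammaIntegral_convergent hμ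
  have h1 : IntegrableOn (fun x : ℝ => ↑(Real.exp (-(r * x))) * ((r * x : ℝ) : ℂ) ^ (μ - 1))
      (Ioi 0) := by
    have := (integrableOn_Ioi_comp_mul_left_iff
      (fun x : ℝ => ↑(Real.exp (-x)) * (x : ℂ) ^ (μ - 1)) 0 hr).mpr
    rw [mul_zero] at this
    exact this h0
  have h2 : IntegrableOn
      (fun x : ℝ => (r : ℂ) ^ (1 - μ) * (↑(Real.exp (-(r * x))) * ((r * x : ℝ) : ℂ) ^ (μ - 1)))
      (Ioi 0) := h1.const_mul ((r : ℂ) ^ (1 - μ))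
  refine h2.congr_fun (fun x hx => ?_) measurableSet_Ioi
  have hx' : (0:ℝ) < x := hx
  dsimp only
  rw [Complex.ofReal_mul, Complex.mul_cpow_ofReal_nonneg hr.le hx'.le]
  have hrc : (r : ℂ) ≠ 0 := Complex.ofReal_ne_zero.mpr hr.ne'
  rw [show ((r:ℂ) ^ (1 - μ) * (↑(Real.exp (-(r * x))) * ((r:ℂ) ^ (μ-1) * (x:ℂ) ^ (μ-1))))
      = ((r:ℂ) ^ (1-μ) * (r:ℂ) ^ (μ-1)) * ((x:ℂ) ^ (μ-1) * ↑(Real.exp (-(r * x)))) by ring,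
    ← Complex.cpow_add _ _ hrc, show (1 - μ) + (μ - 1) = 0 by ring, Complex.cpow_zero, one_mul,
    Complex.ofReal_exp]
  push_cast
  ring_nf

private lemma cosh_subst (ν μ : ℂ) :
    ∫ t : ℝ, Complex.exp (-ν * t) * (1 / (Real.cosh t : ℂ)) ^ μ
      = 2 ^ (μ - 1) * Complex.betaIntegral ((μ - ν) / 2) ((μ + ν) / 2) := by
  set u : ℂ := (μ - ν) / 2 with hu_def
  set v : ℂ := (μ + ν) / 2 with hv_def
  set D : ℝ → ℝ := fun t => 1 + Real.exp (-2 * t) with hD_def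
  set g : ℝ → ℝ := fun t => (D t)⁻¹ with hg_def
  have hD : ∀ t, 0 < D t := fun t => by positivity
  have hD1 : ∀ t, 1 < D t := fun t => by
    have := Real.exp_pos (-2 * t); simp only [hD_def]; linarith
  have hg' : ∀ t, HasDerivAt g (2 * Real.exp (-2 * t) / (D t) ^ 2) t := by
    intro t
    have h1 : HasDerivAt (fun s : ℝ => Real.exp (-2 * s)) (Real.exp (-2 * t) * (-2)) t := by
      simpa using ((hasDerivAt_id t).const_mul (-2)).exp
    have h2 : HasDerivAt D (Real.exp (-2 * t) * (-2)) t := h1.const_add 1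
    have h3 : HasDerivAt (fun y => (D y)⁻¹) (-(Real.exp (-2 * t) * (-2)) / (D t) ^ 2) t :=
      h2.inv (hD t).ne'
    convert h3 using 1
    ring
  have hinj : Function.Injective g := by
    have : StrictMono g := by
      intro s t hst
      have h1 : D t < D s := by
        have := Real.exp_lt_exp.mpr (by linarith : -2 * t < -2 * s)
        simp only [hD_def]; linarith
      exact inv_strictAnti₀ (hD t) h1
    exact this.injective
  have hrange : g '' Set.univ = Ioo (0 : ℝ) 1 := by
    rw [image_univ]
    ext y
    constructor
    · rintro ⟨t, rfl⟩
      exact ⟨inv_pos.mpr (hD t), inv_lt_one_of_one_lt₀ (hD1 t)⟩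
    · rintro ⟨hy0, hy1⟩
      refine ⟨-(1 / 2) * Real.log (1 / y - 1), ?_⟩
      have hA : 0 < 1 / y - 1 := by
        have : 1 < 1 / y := (one_lt_one_div hy0 hy1)
        linarith
      simp only [hg_def, hD_def]
      rw [show -2 * (-(1 / 2) * Real.log (1 / y - 1)) = Real.log (1 / y - 1) by ring,
        Real.exp_log hA]
      rw [show 1 + (1 / y - 1) = 1 / y by ring, one_div, inv_inv]
  -- pointwise identity
  have hpt : ∀ t : ℝ, |2 * Real.exp (-2 * t) / (D t) ^ 2| •
      ((g t : ℂ) ^ (u - 1) * (1 - (g t : ℂ)) ^ (v - 1))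
      = (2 : ℂ) ^ (1 - μ) * (Complex.exp (-ν * t) * (1 / (Real.cosh t : ℂ)) ^ μ) := by
    intro t
    have hE : 0 < Real.exp (-2 * t) := Real.exp_pos _
    have hDt := hD t
    have hgt : 0 < g t := inv_pos.mpr hDt
    have h1g : 0 < 1 - g t := by
      have := inv_lt_one_of_one_lt₀ (hD1 t); simp only [hg_def]; linarith
    have hcosh := Real.cosh_pos t
    have hsc : 0 < 2 * Real.exp (-2 * t) / (D t) ^ 2 := by positivity
    -- log identities
    have hLg : Real.log (g t) = -Real.log (D t) := Real.log_inv _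
    have h1geq : 1 - g t = Real.exp (-2 * t) / D t := by
      simp only [hg_def, hD_def]; field_simp; ring
    have hL1g : Real.log (1 - g t) = -2 * t - Real.log (D t) := by
      rw [h1geq, Real.log_div hE.ne' hDt.ne', Real.log_exp]
    have hLsc : Real.log (2 * Real.exp (-2 * t) / (D t) ^ 2)
        = Real.log 2 + (-2 * t) - 2 * Real.log (D t) := by
      rw [Real.log_div (by positivity) (by positivity), Real.log_mul (by norm_num) hE.ne',
        Real.log_exp, Real.log_pow]
      push_cast; ring
    have hcosh_eq : Real.cosh t = Real.exp t * D t / 2 := by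
      rw [Real.cosh_eq]
      simp only [hD_def]
      rw [mul_add, mul_one, ← Real.exp_add]
      ring_nf
    have hLcosh : Real.log (1 / Real.cosh t) = Real.log 2 - t - Real.log (D t) := by
      rw [one_div, Real.log_inv, hcosh_eq,
        Real.log_div (by positivity) (by norm_num),
        Real.log_mul (Real.exp_pos t).ne' hDt.ne', Real.log_exp]
      ring
    -- convert to cexp
    rw [abs_of_pos hsc, real_smul, ofReal_eq_cexp hsc, hLsc,
      cpow_pos_eq hgt, hLg,
      show (1 - (g t : ℂ)) = ((1 - g t : ℝ) : ℂ) by push_cast; ring,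
      cpow_pos_eq h1g, hL1g,
      show (2 : ℂ) = ((2 : ℝ) : ℂ) by norm_num,
      cpow_pos_eq (by norm_num : (0:ℝ) < 2),
      show (1 / ((Real.cosh t : ℝ) : ℂ)) = ((1 / Real.cosh t : ℝ) : ℂ) by push_cast; ring,
      cpow_pos_eq (by positivity : (0:ℝ) < 1 / Real.cosh t), hLcosh,
      ← Complex.exp_add, ← Complex.exp_add, ← Complex.exp_add, ← Complex.exp_add]
    congr 1
    simp only [hu_def, hv_def]
    push_cast
    ring
  -- beta integral as Ioo integral
  have hbeta : Complex.betaIntegral u v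
      = ∫ x in Ioo (0:ℝ) 1, (x : ℂ) ^ (u - 1) * (1 - (x : ℂ)) ^ (v - 1) := by
    rw [Complex.betaIntegral, intervalIntegral.integral_of_le zero_le_one,
      MeasureTheory.integral_Ioc_eq_integral_Ioo]
  have hsub : Complex.betaIntegral u v
      = (2 : ℂ) ^ (1 - μ) * ∫ t : ℝ, Complex.exp (-ν * t) * (1 / (Real.cosh t : ℂ)) ^ μ := by
    rw [hbeta, ← hrange,
      integral_image_eq_integral_abs_deriv_smul MeasurableSet.univ
        (fun t _ => (hg' t).hasDerivWithinAt) hinj.injOn _]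
    rw [Measure.restrict_univ]
    rw [MeasureTheory.integral_congr_ae (Filter.Eventually.of_forall hpt),
      MeasureTheory.integral_const_mul]
  rw [hsub, ← mul_assoc, ← Complex.cpow_add _ _ (two_ne_zero),
    show (μ - 1) + (1 - μ) = 0 by ring, Complex.cpow_zero, one_mul]

private lemma fubini_aux (ν μ : ℂ) (h : |ν.re| < μ.re) :
    Integrable (Function.uncurry fun (x t : ℝ) =>
      Complex.exp (-(x : ℂ) * Real.cosh t) * Complex.exp (-ν * t) * (x : ℂ) ^ (μ - 1))
      ((volume.restrict (Ioi 0)).prod volume) := by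
  have hμ : 0 < μ.re := lt_of_le_of_lt (abs_nonneg _) h
  have hmeas : AEStronglyMeasurable (Function.uncurry fun (x t : ℝ) =>
      Complex.exp (-(x : ℂ) * Real.cosh t) * Complex.exp (-ν * t) * (x : ℂ) ^ (μ - 1))
      ((volume.restrict (Ioi 0)).prod volume) := by
    have hG : Measurable (fun p : ℝ × ℝ =>
        Complex.exp (-(p.1 : ℂ) * Real.cosh p.2 + -ν * p.2 + (μ - 1) * Real.log p.1)) := by
      apply Measurable.cexp
      apply Measurable.add
      apply Measurable.add
      · exact (Complex.measurable_ofReal.comp measurable_fst).neg.mul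
          (Complex.measurable_ofReal.comp (Real.continuous_cosh.measurable.comp
            measurable_snd))
      · exact ((Complex.measurable_ofReal.comp measurable_snd).const_mul (-ν))
      · exact ((Complex.measurable_ofReal.comp
          (Real.measurable_log.comp measurable_fst)).const_mul (μ - 1))
    have hrw : (volume.restrict (Ioi (0:ℝ))).prod (volume : Measure ℝ)
        = ((volume : Measure ℝ).prod volume).restrict (Ioi 0 ×ˢ Set.univ) := by
      rw [← Measure.prod_restrict, Measure.restrict_univ]
    rw [hrw]
    refine hG.aestronglyMeasurable.congr ?_
    filter_upwards [ae_restrict_mem (measurableSet_Ioi.prod MeasurableSet.univ)] with p hp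
    obtain ⟨hp1, -⟩ := hp
    have hx : (0:ℝ) < p.1 := hp1
    simp only [Function.uncurry]
    rw [Complex.exp_add, Complex.exp_add, cpow_pos_eq hx]
  rw [integrable_prod_iff' hmeas]
  constructor
  · refine Filter.Eventually.of_forall fun t => ?_
    have hc := Real.cosh_pos t
    have h1 : IntegrableOn (fun x : ℝ =>
        (x : ℂ) ^ (μ - 1) * Complex.exp (-((Real.cosh t : ℝ) : ℂ) * x) * Complex.exp (-ν * t))
        (Ioi 0) := by
      have h0 : IntegrableOn (fun x : ℝ =>
          (x : ℂ) ^ (μ - 1) * Complex.exp (-((Real.cosh t : ℝ) * x)) * Complex.exp (-ν * t))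
          (Ioi 0) := (integrableOn_cpow_exp hμ hc).mul_const (Complex.exp (-ν * (t : ℂ)))
      refine h0.congr_fun (fun x _ => ?_) measurableSet_Ioi
      push_cast
      ring_nf
    refine h1.congr_fun (fun x hx => ?_) measurableSet_Ioi
    simp only [Function.uncurry]
    rw [show -((Real.cosh t : ℝ) : ℂ) * (x : ℝ) = -(x : ℂ) * Real.cosh t by ring]
    ring
  · have hnorm : ∀ t : ℝ, (∫ x in Ioi (0:ℝ),
        ‖Complex.exp (-(x : ℂ) * Real.cosh t) * Complex.exp (-ν * t) * (x : ℂ) ^ (μ - 1)‖)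
        = Real.Gamma μ.re * (Real.exp (-ν.re * t) * (1 / Real.cosh t) ^ μ.re) := by
      intro t
      have hc := Real.cosh_pos t
      have h1 : ∀ x ∈ Ioi (0:ℝ),
          ‖Complex.exp (-(x : ℂ) * Real.cosh t) * Complex.exp (-ν * t) * (x : ℂ) ^ (μ - 1)‖
          = x ^ (μ.re - 1) * Real.exp (-(Real.cosh t * x)) * Real.exp (-ν.re * t) := by
        intro x hx
        have hx' : (0:ℝ) < x := hx
        rw [norm_mul, norm_mul, Complex.norm_exp, Complex.norm_exp, Complex.norm_cpow_eq_rpow_re_of_pos hx']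
        have e1 : (-(x : ℂ) * Real.cosh t).re = -(Real.cosh t * x) := by
          simp [Complex.mul_re]; ring
        have e2 : (-ν * (t : ℂ)).re = -ν.re * t := by simp [Complex.mul_re]
        have e3 : (μ - 1).re = μ.re - 1 := by simp
        rw [e1, e2, e3]
        ring
      rw [setIntegral_congr_fun measurableSet_Ioi h1, MeasureTheory.integral_mul_const,
        Real.integral_rpow_mul_exp_neg_mul_Ioi hμ hc]
      ring
    have hInt : Integrable (fun t : ℝ =>
        Real.Gamma μ.re * (Real.exp (-ν.re * t) * (1 / Real.cosh t) ^ μ.re)) :=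
      (integrable_aux h).const_mul _
    refine hInt.congr (Filter.Eventually.of_forall fun t => ?_)
    simp only [Function.uncurry]
    exact (hnorm t).symm

private theorem besselK_mellin' (ν μ : ℂ) (h : |ν.re| < μ.re) :
    ∫ x in Set.Ioi (0 : ℝ), ((1 / 2 : ℂ) *
        ∫ t : ℝ, Complex.exp (-(x : ℂ) * Real.cosh t) * Complex.exp (-ν * t)) * (x : ℂ) ^ (μ - 1)
      = (2 : ℂ) ^ (μ - 2) * Complex.Gamma ((μ - ν) / 2) * Complex.Gamma ((μ + ν) / 2) := by
  have hμ : 0 < μ.re := lt_of_le_of_lt (abs_nonneg _) h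
  have habs := abs_lt.mp h
  have hre : ∀ z : ℂ, (z / 2).re = z.re / 2 := by
    intro z
    rw [Complex.div_re]
    simp [Complex.normSq]
    ring
  have hu : 0 < ((μ - ν) / 2).re := by rw [hre]; simp only [Complex.sub_re]; linarith
  have hv : 0 < ((μ + ν) / 2).re := by rw [hre]; simp only [Complex.add_re]; linarith
  have h1 : ∀ x : ℝ, ((1 / 2 : ℂ) *
        ∫ t : ℝ, Complex.exp (-(x : ℂ) * Real.cosh t) * Complex.exp (-ν * t)) * (x : ℂ) ^ (μ - 1)
      = (1 / 2 : ℂ) * ∫ t : ℝ,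
          Complex.exp (-(x : ℂ) * Real.cosh t) * Complex.exp (-ν * t) * (x : ℂ) ^ (μ - 1) := by
    intro x
    rw [mul_assoc, ← MeasureTheory.integral_mul_const]
  rw [setIntegral_congr_fun measurableSet_Ioi (fun x _ => h1 x),
    MeasureTheory.integral_const_mul,
    MeasureTheory.integral_integral_swap (fubini_aux ν μ h)]
  have h2 : ∀ t : ℝ, (∫ x in Ioi (0:ℝ),
        Complex.exp (-(x : ℂ) * Real.cosh t) * Complex.exp (-ν * t) * (x : ℂ) ^ (μ - 1))
      = Complex.Gamma μ * (Complex.exp (-ν * t) * (1 / (Real.cosh t : ℂ)) ^ μ) := by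
    intro t
    have hc := Real.cosh_pos t
    have e1 : ∀ x ∈ Ioi (0:ℝ),
        Complex.exp (-(x : ℂ) * Real.cosh t) * Complex.exp (-ν * t) * (x : ℂ) ^ (μ - 1)
        = (x : ℂ) ^ (μ - 1) * Complex.exp (-((Real.cosh t : ℝ) * x)) * Complex.exp (-ν * t) := by
      intro x _
      push_cast
      ring_nf
    rw [setIntegral_congr_fun measurableSet_Ioi e1, MeasureTheory.integral_mul_const,
      integral_cpow_mul_exp_neg_mul_Ioi hμ hc]
    ring
  rw [MeasureTheory.integral_congr_ae (Filter.Eventually.of_forall h2),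
    MeasureTheory.integral_const_mul, cosh_subst ν μ]
  have hGG : Complex.Gamma ((μ - ν) / 2) * Complex.Gamma ((μ + ν) / 2)
      = Complex.Gamma μ * Complex.betaIntegral ((μ - ν) / 2) ((μ + ν) / 2) := by
    rw [Complex.Gamma_mul_Gamma_eq_betaIntegral hu hv,
      show (μ - ν) / 2 + (μ + ν) / 2 = μ by ring]
  have h2pow : (2 : ℂ) ^ (μ - 1) = 2 * 2 ^ (μ - 2) := by
    rw [show μ - 1 = 1 + (μ - 2) by ring, Complex.cpow_add _ _ two_ne_zero, Complex.cpow_one]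
  rw [h2pow]
  linear_combination (-(2 : ℂ) ^ (μ - 2)) * hGG


/-- for `Re μ > |Re ν|`, the Mellin transform of `K_ν` satisfies
`∫₀^∞ K_ν(x) x^{μ-1} dx = 2^{μ-2} Γ((μ-ν)/2) Γ((μ+ν)/2)`. -/
theorem besselK_mellin (ν μ : ℂ) (h : |ν.re| < μ.re) :
    ∫ x in Set.Ioi (0 : ℝ), besselK ν x * (x : ℂ) ^ (μ - 1)
      = (2 : ℂ) ^ (μ - 2) * Complex.Gamma ((μ - ν) / 2) * Complex.Gamma ((μ + ν) / 2) := by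
  simp only [besselK]
  exact besselK_mellin' ν μ h
end
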